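/- Asymptotic-preserving property of the full-rank macro–micro scheme: assume the formal ε → 0 limit equations of the scheme hold, namely (1) gX^{n+1}(i,j)_ℓ = −(1/σᵗX(i,j)) [ Ω_x^ℓ (BC^n(i+1,j) − BC^n(i,j))/Δx + Ω_y^ℓ (BK^n(i,j) − BK^n(i,j−1))/Δy ] at every x-interface and every ℓ, (2) gY^{n+1}(i,j)_ℓ = −(1/σᵗY(i,j)) [ Ω_x^ℓ (BK^n(i,j) − BK^n(i−1,j))/Δx + Ω_y^ℓ (BC^n(i,j+1) − BC^n(i,j))/Δy ] at every y-interface and every ℓ, (3) at every cell center (1/(cΔt))(BC^{n+1} − BC^n)(i,j) + (1/(2π)) Σ_ℓ w_ℓ [ Ω_x^ℓ (gX^{n+1}(i,j) − gX^{n+1}(i−1,j))_ℓ/Δx + Ω_y^ℓ (gY^{n+1}(i,j) − gY^{n+1}(i,j−1))_ℓ/Δy ] = −σᵃC(i,j) hC^{n+1}(i,j), and (4) (c_ν/Δt)(TC^{n+1} − TC^n)(i,j) = 2π σᵃC(i,j) hC^{n+1}(i,j). Then at every cell center (i,j) the discrete Rosseland diffusion equation holds: (c_ν/Δt)(TC^{n+1}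 − TC^n)(i,j) + (2π/(cΔt))(BC^{n+1} − BC^n)(i,j) = (2π/3) { (1/Δx)[ (1/σᵗX(i,j))(BC^n(i+1,j) − BC^n(i,j))/Δx − (1/σᵗX(i−1,j))(BC^n(i,j) − BC^n(i−1,j))/Δx ] + (1/Δy)[ (1/σᵗY(i,j))(BC^n(i,j+1) − BC^n(i,j))/Δy − (1/σᵗY(i,j−1))(BC^n(i,j) − BC^n(i,j−1))/Δy ] }. -/
import Mathlib


open Finset Real

/-- Asymptotic-preserving property of the full-rank macro–micro scheme:
if the formal `ε → 0` limit equations of the scheme hold, then at every cell center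
the discrete Rosseland diffusion equation (5-point centered difference on a staggered
grid with explicit time discretization) holds. -/
theorem full_rank_macro_micro_AP
    (Nx Ny Nq : ℕ) [NeZero Nx] [NeZero Ny]
    (Δx Δy Δt c a cν : ℝ)
    (hΔx : 0 < Δx) (hΔy : 0 < Δy) (hΔt : 0 < Δt)
    (hc : 0 < c) (ha : 0 < a) (hcν : 0 < cν)
    (w Ωx Ωy : Fin Nq → ℝ) (hw : ∀ ℓ, 0 ≤ w ℓ)
    -- quadrature exactness conditions
    (hquadx : ∑ ℓ : Fin Nq, w ℓ * (Ωx ℓ) ^ 2 = 2 * π / 3)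
    (hquady : ∑ ℓ : Fin Nq, w ℓ * (Ωy ℓ) ^ 2 = 2 * π / 3)
    (hquadxy : ∑ ℓ : Fin Nq, w ℓ * (Ωx ℓ * Ωy ℓ) = 0)
    -- unknowns at time levels n (suffix 0) and n+1 (suffix 1)
    (gX0 gX1 gY0 gY1 : ZMod Nx × ZMod Ny → Fin Nq → ℝ)
    (hC0 hC1 TC0 TC1 hK0 hK1 TK0 TK1 : ZMod Nx × ZMod Ny → ℝ)
    -- cross sections
    (σtX σtY σaC : ZMod Nx × ZMod Ny → ℝ)
    (hσtX : ∀ p, 0 < σtX p) (hσtY : ∀ p, 0 < σtY p) (hσaC : ∀ p, 0 ≤ σaC p)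
    -- (1) limit micro equation at every x-interface and every ℓ
    (hgX : ∀ i : ZMod Nx, ∀ j : ZMod Ny, ∀ ℓ : Fin Nq,
      gX1 (i, j) ℓ = -(1 / σtX (i, j)) *
        (Ωx ℓ * ((a * c / (2 * π) * (TC0 (i + 1, j)) ^ 4
                  - a * c / (2 * π) * (TC0 (i, j)) ^ 4) / Δx)
         + Ωy ℓ * ((a * c / (2 * π) * (TK0 (i, j)) ^ 4
                  - a * c / (2 * π) * (TK0 (i, j - 1)) ^ 4) / Δy)))
    -- (2) limit micro equation at every y-interface and every ℓ
    (hgY : ∀ i : ZMod Nx, ∀ j : ZMod Ny, ∀ ℓ : Fin Nq,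
      gY1 (i, j) ℓ = -(1 / σtY (i, j)) *
        (Ωx ℓ * ((a * c / (2 * π) * (TK0 (i, j)) ^ 4
                  - a * c / (2 * π) * (TK0 (i - 1, j)) ^ 4) / Δx)
         + Ωy ℓ * ((a * c / (2 * π) * (TC0 (i, j + 1)) ^ 4
                  - a * c / (2 * π) * (TC0 (i, j)) ^ 4) / Δy)))
    -- (3) limit scalar-flux equation at every cell center
    (hflux : ∀ i : ZMod Nx, ∀ j : ZMod Ny,
      1 / (c * Δt) * (a * c / (2 * π) * (TC1 (i, j)) ^ 4
                      - a * c / (2 * π) * (TC0 (i, j)) ^ 4)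
        + (1 / (2 * π)) * ∑ ℓ : Fin Nq, w ℓ *
            (Ωx ℓ * ((gX1 (i, j) ℓ - gX1 (i - 1, j) ℓ) / Δx)
             + Ωy ℓ * ((gY1 (i, j) ℓ - gY1 (i, j - 1) ℓ) / Δy))
      = -(σaC (i, j)) * hC1 (i, j))
    -- (4) temperature equation at every cell center
    (hTemp : ∀ i : ZMod Nx, ∀ j : ZMod Ny,
      cν / Δt * (TC1 (i, j) - TC0 (i, j)) = 2 * π * σaC (i, j) * hC1 (i, j)) :
    -- discrete Rosseland diffusion equation at every cell center
    ∀ i : ZMod Nx, ∀ j : ZMod Ny,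
      cν / Δt * (TC1 (i, j) - TC0 (i, j))
        + (2 * π / (c * Δt)) * (a * c / (2 * π) * (TC1 (i, j)) ^ 4
                                - a * c / (2 * π) * (TC0 (i, j)) ^ 4)
      = (2 * π / 3) *
          ((1 / Δx) *
            ((1 / σtX (i, j)) * ((a * c / (2 * π) * (TC0 (i + 1, j)) ^ 4
                                  - a * c / (2 * π) * (TC0 (i, j)) ^ 4) / Δx)
             - (1 / σtX (i - 1, j)) * ((a * c / (2 * π) * (TC0 (i, j)) ^ 4
                                  - a * c / (2 * π) * (TC0 (i - 1, j)) ^ 4) / Δx))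
           + (1 / Δy) *
            ((1 / σtY (i, j)) * ((a * c / (2 * π) * (TC0 (i, j + 1)) ^ 4
                                  - a * c / (2 * π) * (TC0 (i, j)) ^ 4) / Δy)
             - (1 / σtY (i, j - 1)) * ((a * c / (2 * π) * (TC0 (i, j)) ^ 4
                                  - a * c / (2 * π) * (TC0 (i, j - 1)) ^ 4) / Δy))) := by

  intro i j
  have hfl := hflux i j
  have hTe := hTemp i j
  set cX : ℝ := (1 / σtX (i - 1, j) * ((a * c / (2 * π) * (TC0 (i, j)) ^ 4
                  - a * c / (2 * π) * (TC0 (i - 1, j)) ^ 4) / Δx)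
               - 1 / σtX (i, j) * ((a * c / (2 * π) * (TC0 (i + 1, j)) ^ 4
                  - a * c / (2 * π) * (TC0 (i, j)) ^ 4) / Δx)) / Δx with hcX
  set cY : ℝ := (1 / σtY (i, j - 1) * ((a * c / (2 * π) * (TC0 (i, j)) ^ 4
                  - a * c / (2 * π) * (TC0 (i, j - 1)) ^ 4) / Δy)
               - 1 / σtY (i, j) * ((a * c / (2 * π) * (TC0 (i, j + 1)) ^ 4
                  - a * c / (2 * π) * (TC0 (i, j)) ^ 4) / Δy)) / Δy with hcY
  set cZ : ℝ := (1 / σtX (i - 1, j) * ((a * c / (2 * π) * (TK0 (i - 1, j)) ^ 4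
                  - a * c / (2 * π) * (TK0 (i - 1, j - 1)) ^ 4) / Δy)
               - 1 / σtX (i, j) * ((a * c / (2 * π) * (TK0 (i, j)) ^ 4
                  - a * c / (2 * π) * (TK0 (i, j - 1)) ^ 4) / Δy)) / Δx
              + (1 / σtY (i, j - 1) * ((a * c / (2 * π) * (TK0 (i, j - 1)) ^ 4
                  - a * c / (2 * π) * (TK0 (i - 1, j - 1)) ^ 4) / Δx)
               - 1 / σtY (i, j) * ((a * c / (2 * π) * (TK0 (i, j)) ^ 4
                  - a * c / (2 * π) * (TK0 (i - 1, j)) ^ 4) / Δx)) / Δy with hcZ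
  have hsum : (∑ ℓ : Fin Nq, w ℓ *
            (Ωx ℓ * ((gX1 (i, j) ℓ - gX1 (i - 1, j) ℓ) / Δx)
             + Ωy ℓ * ((gY1 (i, j) ℓ - gY1 (i, j - 1) ℓ) / Δy)))
      = (2 * π / 3) * cX + (2 * π / 3) * cY + 0 * cZ := by
    have h1 : (∑ ℓ : Fin Nq, w ℓ *
            (Ωx ℓ * ((gX1 (i, j) ℓ - gX1 (i - 1, j) ℓ) / Δx)
             + Ωy ℓ * ((gY1 (i, j) ℓ - gY1 (i, j - 1) ℓ) / Δy)))
        = ∑ ℓ : Fin Nq, (w ℓ * (Ωx ℓ) ^ 2 * cX + w ℓ * (Ωy ℓ) ^ 2 * cY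
            + w ℓ * (Ωx ℓ * Ωy ℓ) * cZ) := by
      refine Finset.sum_congr rfl fun ℓ _ => ?_
      rw [hgX i j ℓ, hgX (i - 1) j ℓ, hgY i j ℓ, hgY i (j - 1) ℓ, hcX, hcY, hcZ]
      ring
    rw [h1, Finset.sum_add_distrib, Finset.sum_add_distrib,
      ← Finset.sum_mul, ← Finset.sum_mul, ← Finset.sum_mul,
      hquadx, hquady, hquadxy]
  rw [hsum] at hfl
  have hπ : π ≠ 0 := Real.pi_ne_zero
  have hΔx' : Δx ≠ 0 := ne_of_gt hΔx
  have hΔy' : Δy ≠ 0 := ne_of_gt hΔy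
  rw [hTe]
  have hnorm : (1:ℝ) / (2 * π) * (2 * π / 3 * cX + 2 * π / 3 * cY + 0 * cZ)
      = cX / 3 + cY / 3 := by
    field_simp
    ring
  rw [hnorm] at hfl
  rw [hcX, hcY] at hfl
  linear_combination (2 * π) * hfl
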